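/- Let Ω be a bounded open convex domain with Hilbert metric d_Ω. If x₁, x₂, y₁, y₂ ∈ Ω, then the Hausdorff distance (for d_Ω) between the segments [x₁,y₁] and [x₂,y₂] is at most d_Ω(x₁,x₂) + d_Ω(y₁,y₂). -/

import Mathlib

open Set Filter Classical

abbrev Ed (d : ℕ) := EuclideanSpace ℝ (Fin d)

/-- A properly convex domain in an affine chart: a bounded open convex nonempty set. -/
def IsProperlyConvex {d : ℕ} (Ω : Set (Ed d)) : Prop :=
  IsOpen Ω ∧ Convex ℝ Ω ∧ Bornology.IsBounded Ω ∧ Ω.Nonempty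

/-- The face of `x`: `x` together with all points `q` such that some segment inside the
closure of `Ω` contains both `x` and `q` in its interior. -/
def face {d : ℕ} (Ω : Set (Ed d)) (x : Ed d) : Set (Ed d) :=
  insert x {q | ∃ u v : Ed d, segment ℝ u v ⊆ closure Ω ∧
    x ∈ openSegment ℝ u v ∧ q ∈ openSegment ℝ u v}

/-- The Hilbert metric on a bounded open convex set, defined via the cross-ratio of
`x`, `y` and the two intersection points of the line through `x, y` with the boundary. -/
noncomputable def hilbertDist {d : ℕ} (Ω : Set (Ed d)) (x y : Ed d) : ℝ :=
  if x = y then 0 else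
    let a := x + (sSup {t : ℝ | x + t • (x - y) ∈ Ω}) • (x - y)
    let b := y + (sSup {t : ℝ | y + t • (y - x) ∈ Ω}) • (y - x)
    Real.log ((‖b - x‖ * ‖y - a‖) / (‖b - y‖ * ‖x - a‖))

lemma affine_nonneg_left {a b A B : ℝ} (hab : a < b)
    (h : ∀ t ∈ Set.Ioo a b, 0 < A + t * B) : 0 ≤ A + a * B := by
  have hcont : Tendsto (fun t : ℝ => A + t * B) (nhdsWithin a (Set.Ioi a)) (nhds (A + a * B)) :=
    ((continuous_const.add (continuous_id.mul continuous_const)).tendsto a).mono_left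
      nhdsWithin_le_nhds
  refine ge_of_tendsto hcont ?_
  filter_upwards [Ioo_mem_nhdsGT_of_mem ⟨le_refl a, hab⟩] with t ht using (h t ht).le

lemma affine_nonneg_right {a b A B : ℝ} (hab : a < b)
    (h : ∀ t ∈ Set.Ioo a b, 0 < A + t * B) : 0 ≤ A + b * B := by
  have hcont : Tendsto (fun t : ℝ => A + t * B) (nhdsWithin b (Set.Iio b)) (nhds (A + b * B)) :=
    ((continuous_const.add (continuous_id.mul continuous_const)).tendsto b).mono_left
      nhdsWithin_le_nhds
  refine ge_of_tendsto hcont ?_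
  filter_upwards [Ioo_mem_nhdsLT_of_mem ⟨hab, le_refl b⟩] with t ht using (h t ht).le

lemma hilbert_line {d : ℕ} {Ω : Set (Ed d)} (hΩ : IsProperlyConvex Ω) {x y : Ed d}
    (hx : x ∈ Ω) (hy : y ∈ Ω) (hxy : x ≠ y) :
    ∃ α β : ℝ, α < 0 ∧ 1 < β ∧
      (∀ t ∈ Set.Ioo α β, x + t • (y - x) ∈ Ω) ∧
      x + α • (y - x) ∉ Ω ∧ x + β • (y - x) ∉ Ω ∧
      hilbertDist Ω x y = Real.log (β * (1 - α) / ((β - 1) * (-α))) := by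
  obtain ⟨hopen, hconv, hbdd, -⟩ := hΩ
  have hvne : y - x ≠ 0 := sub_ne_zero.mpr (Ne.symm hxy)
  have hvpos : 0 < ‖y - x‖ := norm_pos_iff.mpr hvne
  obtain ⟨R, hR⟩ := hbdd.exists_norm_le
  -- the interval on the line
  set I : Set ℝ := (⇑(AffineMap.lineMap x y : ℝ →ᵃ[ℝ] Ed d)) ⁻¹' Ω with hI
  have hmemI : ∀ t : ℝ, t ∈ I ↔ x + t • (y - x) ∈ Ω := by
    intro t
    rw [hI, Set.mem_preimage, AffineMap.lineMap_apply_module]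
    have h : (1 - t) • x + t • y = x + t • (y - x) := by module
    rw [h]
  have hIconv : Convex ℝ I := hconv.affine_preimage _
  have hIord : I.OrdConnected := hIconv.ordConnected
  have h0I : (0 : ℝ) ∈ I := by rw [hmemI]; simpa using hx
  have h1I : (1 : ℝ) ∈ I := by rw [hmemI]; simpa using hy
  -- the two sSup sets
  have hS₁ : ∀ t : ℝ, x + t • (x - y) ∈ Ω ↔ (-t) ∈ I := by
    intro t
    rw [hmemI]
    constructor <;> intro h <;> [skip; skip] <;>
      · convert h using 2
        module
  have hS₂ : ∀ t : ℝ, y + t • (y - x) ∈ Ω ↔ (1 + t) ∈ I := by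
    intro t
    rw [hmemI]
    constructor <;> intro h <;>
      · convert h using 1
        module
  -- boundedness of I
  have hIbdd : ∀ t ∈ I, |t| ≤ (R + ‖x‖) / ‖y - x‖ := by
    intro t ht
    rw [hmemI] at ht
    have h1 : ‖x + t • (y - x)‖ ≤ R := hR _ ht
    have h2 : ‖t • (y - x)‖ ≤ R + ‖x‖ := by
      have h3 : ‖(x + t • (y - x)) - x‖ ≤ ‖x + t • (y - x)‖ + ‖x‖ := norm_sub_le _ _
      simp only [add_sub_cancel_left] at h3
      linarith
    rw [norm_smul, Real.norm_eq_abs] at h2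
    rw [le_div_iff₀ hvpos]
    linarith
  
  -- facts about S₁
  have hS₁ne : ({t : ℝ | x + t • (x - y) ∈ Ω}).Nonempty := ⟨0, by simpa using hx⟩
  have hS₁bdd : BddAbove {t : ℝ | x + t • (x - y) ∈ Ω} := by
    refine ⟨(R + ‖x‖) / ‖y - x‖, fun t ht => ?_⟩
    have h := hIbdd (-t) ((hS₁ t).mp ht)
    rw [abs_neg] at h
    exact (le_abs_self t).trans h
  have hS₂ne : ({t : ℝ | y + t • (y - x) ∈ Ω}).Nonempty := ⟨0, by simpa using hy⟩
  have hS₂bdd : BddAbove {t : ℝ | y + t • (y - x) ∈ Ω} := by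
    refine ⟨(R + ‖x‖) / ‖y - x‖ - 1, fun t ht => ?_⟩
    have h := hIbdd (1 + t) ((hS₂ t).mp ht)
    have h2 : 1 + t ≤ |1 + t| := le_abs_self _
    linarith
  set s := sSup {t : ℝ | x + t • (x - y) ∈ Ω} with hs_def
  set r := sSup {t : ℝ | y + t • (y - x) ∈ Ω} with hr_def
  have hs_pos : 0 < s := by
    obtain ⟨ε, hε, hball⟩ := Metric.isOpen_iff.mp hopen x hx
    set δ := ε / (2 * ‖y - x‖) with hδ
    have hδpos : 0 < δ := by positivity
    have hδmem : x + δ • (x - y) ∈ Ω := by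
      apply hball
      rw [Metric.mem_ball, dist_eq_norm]
      have h4 : x + δ • (x - y) - x = δ • (x - y) := by module
      rw [h4, norm_smul, Real.norm_eq_abs, abs_of_pos hδpos, norm_sub_rev x y]
      have h5 : δ * ‖y - x‖ = ε / 2 := by rw [hδ]; field_simp
      linarith
    exact lt_of_lt_of_le hδpos (le_csSup hS₁bdd hδmem)
  have hr_pos : 0 < r := by
    obtain ⟨ε, hε, hball⟩ := Metric.isOpen_iff.mp hopen y hy
    set δ := ε / (2 * ‖y - x‖) with hδ
    have hδpos : 0 < δ := by positivity
    have hδmem : y + δ • (y - x) ∈ Ω := by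
      apply hball
      rw [Metric.mem_ball, dist_eq_norm]
      have h4 : y + δ • (y - x) - y = δ • (y - x) := by module
      rw [h4, norm_smul, Real.norm_eq_abs, abs_of_pos hδpos]
      have h5 : δ * ‖y - x‖ = ε / 2 := by rw [hδ]; field_simp
      linarith
    exact lt_of_lt_of_le hδpos (le_csSup hS₂bdd hδmem)
  have hs_not : x + s • (x - y) ∉ Ω := by
    intro hmem
    obtain ⟨ε, hε, hball⟩ := Metric.isOpen_iff.mp hopen _ hmem
    set δ := ε / (2 * ‖y - x‖) with hδ
    have hδpos : 0 < δ := by positivity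
    have hmem2 : x + (s + δ) • (x - y) ∈ Ω := by
      apply hball
      rw [Metric.mem_ball, dist_eq_norm]
      have h4 : x + (s + δ) • (x - y) - (x + s • (x - y)) = δ • (x - y) := by module
      rw [h4, norm_smul, Real.norm_eq_abs, abs_of_pos hδpos, norm_sub_rev x y]
      have h5 : δ * ‖y - x‖ = ε / 2 := by rw [hδ]; field_simp
      linarith
    have := le_csSup hS₁bdd hmem2
    rw [← hs_def] at this
    linarith
  have hr_not : y + r • (y - x) ∉ Ω := by
    intro hmem
    obtain ⟨ε, hε, hball⟩ := Metric.isOpen_iff.mp hopen _ hmem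
    set δ := ε / (2 * ‖y - x‖) with hδ
    have hδpos : 0 < δ := by positivity
    have hmem2 : y + (r + δ) • (y - x) ∈ Ω := by
      apply hball
      rw [Metric.mem_ball, dist_eq_norm]
      have h4 : y + (r + δ) • (y - x) - (y + r • (y - x)) = δ • (y - x) := by module
      rw [h4, norm_smul, Real.norm_eq_abs, abs_of_pos hδpos]
      have h5 : δ * ‖y - x‖ = ε / 2 := by rw [hδ]; field_simp
      linarith
    have := le_csSup hS₂bdd hmem2
    rw [← hr_def] at this
    linarith
  have hIoo : ∀ t ∈ Set.Ioo (-s) (1 + r), x + t • (y - x) ∈ Ω := by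
    rintro t ⟨ht1, ht2⟩
    have h6 : -t < s := by linarith
    obtain ⟨u, hu, hu2⟩ := exists_lt_of_lt_csSup hS₁ne h6
    have h7 : t - 1 < r := by linarith
    obtain ⟨w, hw, hw2⟩ := exists_lt_of_lt_csSup hS₂ne h7
    have huI : -u ∈ I := (hS₁ u).mp hu
    have hwI : 1 + w ∈ I := (hS₂ w).mp hw
    rw [← hmemI]
    exact hIord.out huI hwI ⟨by linarith, by linarith⟩
  have hαnot : x + (-s) • (y - x) ∉ Ω := by
    have h8 : x + (-s) • (y - x) = x + s • (x - y) := by module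
    rw [h8]; exact hs_not
  have hβnot : x + (1 + r) • (y - x) ∉ Ω := by
    have h8 : x + (1 + r) • (y - x) = y + r • (y - x) := by module
    rw [h8]; exact hr_not
  refine ⟨-s, 1 + r, by linarith, by linarith, hIoo, hαnot, hβnot, ?_⟩
  simp only [hilbertDist, if_neg hxy]
  rw [← hs_def, ← hr_def]
  have e1 : y + r • (y - x) - x = (1 + r) • (y - x) := by module
  have e2 : y - (x + s • (x - y)) = (1 + s) • (y - x) := by module
  have e3 : y + r • (y - x) - y = r • (y - x) := by module
  have e4 : x - (x + s • (x - y)) = s • (y - x) := by module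
  rw [e1, e2, e3, e4, norm_smul, norm_smul, norm_smul, norm_smul]
  simp only [Real.norm_eq_abs]
  rw [abs_of_pos (by linarith : (0:ℝ) < 1 + r), abs_of_pos (by linarith : (0:ℝ) < 1 + s),
    abs_of_pos hr_pos, abs_of_pos hs_pos]
  congr 1
  have hv := hvpos.ne'
  have hs := hs_pos.ne'
  have hr := hr_pos.ne'
  field_simp
  ring_nf
  simp only [mul_assoc, mul_inv_cancel₀ hr, mul_one]
  ring

lemma hilbert_ub {d : ℕ} {Ω : Set (Ed d)} (hΩ : IsProperlyConvex Ω) {x y : Ed d}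
    (hx : x ∈ Ω) (hy : y ∈ Ω) (f g : Ed d →L[ℝ] ℝ) (c₁ c₂ : ℝ)
    (hf : ∀ z ∈ Ω, 0 < c₁ - f z) (hg : ∀ z ∈ Ω, 0 < c₂ - g z) :
    (c₁ - f x) * (c₂ - g y) ≤ Real.exp (hilbertDist Ω x y) * ((c₁ - f y) * (c₂ - g x)) := by
  rcases eq_or_ne x y with rfl | hxy
  · rw [hilbertDist, if_pos rfl, Real.exp_zero, one_mul]
  · obtain ⟨α, β, hα, hβ, hIoo, -, -, hdist⟩ := hilbert_line hΩ hx hy hxy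
    have hR : (0:ℝ) < β * (1 - α) / ((β - 1) * (-α)) := by
      apply div_pos <;> apply mul_pos <;> linarith
    rw [hdist, Real.exp_log hR]
    have hP : 0 < c₁ - f x := hf x hx
    have hQ : 0 < c₁ - f y := hf y hy
    have hS : 0 < c₂ - g x := hg x hx
    have hT : 0 < c₂ - g y := hg y hy
    have hcompf : ∀ t : ℝ, f (x + t • (y - x)) = f x + t * (f y - f x) := by
      intro t
      rw [map_add, map_smul, map_sub, smul_eq_mul]
    have hposf : ∀ t ∈ Set.Ioo α β, 0 < (c₁ - f x) + t * ((c₁ - f y) - (c₁ - f x)) := by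
      intro t ht
      have h := hf _ (hIoo t ht)
      rw [hcompf t] at h
      nlinarith
    have hposg : ∀ t ∈ Set.Ioo α β, 0 < (c₂ - g x) + t * ((c₂ - g y) - (c₂ - g x)) := by
      intro t ht
      have h := hg _ (hIoo t ht)
      have hcg : g (x + t • (y - x)) = g x + t * (g y - g x) := by
        rw [map_add, map_smul, map_sub, smul_eq_mul]
      rw [hcg] at h
      nlinarith
    have hαβ : α < β := by linarith
    have hend1 := affine_nonneg_right hαβ hposf
    have hend2 := affine_nonneg_left hαβ hposg
    have h1 : (β - 1) * (c₁ - f x) ≤ β * (c₁ - f y) := by nlinarith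
    have h2 : (-α) * (c₂ - g y) ≤ (1 - α) * (c₂ - g x) := by nlinarith
    have key : ((β - 1) * (c₁ - f x)) * ((-α) * (c₂ - g y)) ≤
        (β * (c₁ - f y)) * ((1 - α) * (c₂ - g x)) := by
      exact mul_le_mul h1 h2 (mul_nonneg (by linarith) hT.le) (mul_nonneg (by linarith) hQ.le)
    rw [div_mul_eq_mul_div, le_div_iff₀ (by apply mul_pos <;> linarith)]
    nlinarith [key]

lemma hilbert_rep {d : ℕ} {Ω : Set (Ed d)} (hΩ : IsProperlyConvex Ω) {x y : Ed d}
    (hx : x ∈ Ω) (hy : y ∈ Ω) (hxy : x ≠ y) :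
    ∃ (f g : Ed d →L[ℝ] ℝ) (c₁ c₂ : ℝ), (∀ z ∈ Ω, 0 < c₁ - f z) ∧ (∀ z ∈ Ω, 0 < c₂ - g z) ∧
      (c₁ - f x) * (c₂ - g y) = Real.exp (hilbertDist Ω x y) * ((c₁ - f y) * (c₂ - g x)) := by
  obtain ⟨α, β, hα, hβ, hIoo, hαnot, hβnot, hdist⟩ := hilbert_line hΩ hx hy hxy
  obtain ⟨f, hf⟩ := geometric_hahn_banach_open_point hΩ.2.1 hΩ.1 hβnot
  obtain ⟨g, hg⟩ := geometric_hahn_banach_open_point hΩ.2.1 hΩ.1 hαnot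
  refine ⟨f, g, f (x + β • (y - x)), g (x + α • (y - x)),
    fun z hz => sub_pos.mpr (hf z hz), fun z hz => sub_pos.mpr (hg z hz), ?_⟩
  have hR : (0:ℝ) < β * (1 - α) / ((β - 1) * (-α)) := by
    apply div_pos <;> apply mul_pos <;> linarith
  rw [hdist, Real.exp_log hR]
  have hfz : f (x + β • (y - x)) = f x + β * (f y - f x) := by
    rw [map_add, map_smul, map_sub, smul_eq_mul]
  have hgz : g (x + α • (y - x)) = g x + α * (g y - g x) := by
    rw [map_add, map_smul, map_sub, smul_eq_mul]
  rw [hfz, hgz, div_mul_eq_mul_div, eq_div_iff (by apply ne_of_gt; apply mul_pos <;> linarith)]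
  ring

lemma hilbert_nonneg {d : ℕ} {Ω : Set (Ed d)} (hΩ : IsProperlyConvex Ω) {x y : Ed d}
    (hx : x ∈ Ω) (hy : y ∈ Ω) : 0 ≤ hilbertDist Ω x y := by
  have h := hilbert_ub hΩ hx hy 0 0 1 1 (by intro z hz; simp) (by intro z hz; simp)
  simp only [ContinuousLinearMap.zero_apply, sub_zero, mul_one, one_mul] at h
  exact Real.one_le_exp_iff.mp h

lemma hilbert_core {d : ℕ} {Ω : Set (Ed d)} (hΩ : IsProperlyConvex Ω) {x₁ x₂ y₁ y₂ : Ed d}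
    (hx₁ : x₁ ∈ Ω) (hx₂ : x₂ ∈ Ω) (hy₁ : y₁ ∈ Ω) (hy₂ : y₂ ∈ Ω) {a b : ℝ}
    (ha : 0 ≤ a) (hb : 0 ≤ b) (hab : a + b = 1) :
    hilbertDist Ω (a • x₁ + b • y₁) (a • x₂ + b • y₂) ≤
      hilbertDist Ω x₁ x₂ + hilbertDist Ω y₁ y₂ := by
  have hd₁ := hilbert_nonneg hΩ hx₁ hx₂
  have hd₂ := hilbert_nonneg hΩ hy₁ hy₂
  set p := a • x₁ + b • y₁ with hp_def
  set q := a • x₂ + b • y₂ with hq_def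
  have hp : p ∈ Ω := hΩ.2.1 hx₁ hy₁ ha hb hab
  have hq : q ∈ Ω := hΩ.2.1 hx₂ hy₂ ha hb hab
  rcases eq_or_ne p q with hpq | hpq
  · rw [hpq, hilbertDist, if_pos rfl]; linarith
  · obtain ⟨f, g, c₁, c₂, hf, hg, heq⟩ := hilbert_rep hΩ hp hq hpq
    set E₁ := Real.exp (hilbertDist Ω x₁ x₂) with hE₁_def
    set E₂ := Real.exp (hilbertDist Ω y₁ y₂) with hE₂_def
    have hE₁ : 1 ≤ E₁ := Real.one_le_exp hd₁
    have hE₂ : 1 ≤ E₂ := Real.one_le_exp hd₂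
    have hE₁0 : 0 < E₁ := Real.exp_pos _
    have hE₂0 : 0 < E₂ := Real.exp_pos _
    have hfp : c₁ - f p = a * (c₁ - f x₁) + b * (c₁ - f y₁) := by
      rw [hp_def, map_add, map_smul, map_smul, smul_eq_mul, smul_eq_mul]
      linear_combination (-c₁) * hab
    have hfq : c₁ - f q = a * (c₁ - f x₂) + b * (c₁ - f y₂) := by
      rw [hq_def, map_add, map_smul, map_smul, smul_eq_mul, smul_eq_mul]
      linear_combination (-c₁) * hab
    have hgp : c₂ - g p = a * (c₂ - g x₁) + b * (c₂ - g y₁) := by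
      rw [hp_def, map_add, map_smul, map_smul, smul_eq_mul, smul_eq_mul]
      linear_combination (-c₂) * hab
    have hgq : c₂ - g q = a * (c₂ - g x₂) + b * (c₂ - g y₂) := by
      rw [hq_def, map_add, map_smul, map_smul, smul_eq_mul, smul_eq_mul]
      linear_combination (-c₂) * hab
    have pA1 : 0 < c₁ - f x₁ := hf x₁ hx₁
    have pA2 : 0 < c₁ - f x₂ := hf x₂ hx₂
    have pAy1 : 0 < c₁ - f y₁ := hf y₁ hy₁
    have pAy2 : 0 < c₁ - f y₂ := hf y₂ hy₂
    have pB1 : 0 < c₂ - g x₁ := hg x₁ hx₁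
    have pB2 : 0 < c₂ - g x₂ := hg x₂ hx₂
    have pBy1 : 0 < c₂ - g y₁ := hg y₁ hy₁
    have pBy2 : 0 < c₂ - g y₂ := hg y₂ hy₂
    have B1 := hilbert_ub hΩ hx₁ hx₂ f g c₁ c₂ hf hg
    have B2 := hilbert_ub hΩ hy₁ hy₂ f g c₁ c₂ hf hg
    have B3 := hilbert_ub hΩ hx₁ hx₂ f 0 c₁ 1 hf (by intro z hz; simp)
    have B4 := hilbert_ub hΩ hy₁ hy₂ 0 g 1 c₂ (by intro z hz; simp) hg
    have B5 := hilbert_ub hΩ hy₁ hy₂ f 0 c₁ 1 hf (by intro z hz; simp)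
    have B6 := hilbert_ub hΩ hx₁ hx₂ 0 g 1 c₂ (by intro z hz; simp) hg
    simp only [ContinuousLinearMap.zero_apply, sub_zero, mul_one, one_mul] at B3 B4 B5 B6
    rw [← hE₁_def] at B1 B3 B6
    rw [← hE₂_def] at B2 B4 B5
    -- the four term inequalities
    have i1 : (c₁ - f x₁) * (c₂ - g x₂) ≤ E₁ * E₂ * ((c₁ - f x₂) * (c₂ - g x₁)) := by
      calc (c₁ - f x₁) * (c₂ - g x₂) ≤ E₁ * ((c₁ - f x₂) * (c₂ - g x₁)) := B1
        _ ≤ E₁ * E₂ * ((c₁ - f x₂) * (c₂ - g x₁)) :=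
            mul_le_mul_of_nonneg_right (le_mul_of_one_le_right hE₁0.le hE₂)
              (mul_pos pA2 pB1).le
    have i2 : (c₁ - f y₁) * (c₂ - g y₂) ≤ E₁ * E₂ * ((c₁ - f y₂) * (c₂ - g y₁)) := by
      calc (c₁ - f y₁) * (c₂ - g y₂) ≤ E₂ * ((c₁ - f y₂) * (c₂ - g y₁)) := B2
        _ ≤ E₁ * E₂ * ((c₁ - f y₂) * (c₂ - g y₁)) :=
            mul_le_mul_of_nonneg_right (le_mul_of_one_le_left hE₂0.le hE₁)
              (mul_pos pAy2 pBy1).le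
    have i3 : (c₁ - f x₁) * (c₂ - g y₂) ≤ E₁ * E₂ * ((c₁ - f x₂) * (c₂ - g y₁)) := by
      calc (c₁ - f x₁) * (c₂ - g y₂) ≤ (E₁ * (c₁ - f x₂)) * (E₂ * (c₂ - g y₁)) :=
            mul_le_mul B3 B4 pBy2.le (by positivity)
        _ = E₁ * E₂ * ((c₁ - f x₂) * (c₂ - g y₁)) := by ring
    have i4 : (c₁ - f y₁) * (c₂ - g x₂) ≤ E₁ * E₂ * ((c₁ - f y₂) * (c₂ - g x₁)) := by
      calc (c₁ - f y₁) * (c₂ - g x₂) ≤ (E₂ * (c₁ - f y₂)) * (E₁ * (c₂ - g x₁)) :=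
            mul_le_mul B5 B6 pB2.le (by positivity)
        _ = E₁ * E₂ * ((c₁ - f y₂) * (c₂ - g x₁)) := by ring
    have t1 : a^2 * ((c₁ - f x₁) * (c₂ - g x₂)) ≤ a^2 * (E₁ * E₂ * ((c₁ - f x₂) * (c₂ - g x₁))) :=
      mul_le_mul_of_nonneg_left i1 (by positivity)
    have t2 : b^2 * ((c₁ - f y₁) * (c₂ - g y₂)) ≤ b^2 * (E₁ * E₂ * ((c₁ - f y₂) * (c₂ - g y₁))) :=
      mul_le_mul_of_nonneg_left i2 (by positivity)
    have t3 : (a*b) * ((c₁ - f x₁) * (c₂ - g y₂)) ≤ (a*b) * (E₁ * E₂ * ((c₁ - f x₂) * (c₂ - g y₁))) :=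
      mul_le_mul_of_nonneg_left i3 (by positivity)
    have t4 : (a*b) * ((c₁ - f y₁) * (c₂ - g x₂)) ≤ (a*b) * (E₁ * E₂ * ((c₁ - f y₂) * (c₂ - g x₁))) :=
      mul_le_mul_of_nonneg_left i4 (by positivity)
    have main : (c₁ - f p) * (c₂ - g q) ≤ (E₁ * E₂) * ((c₁ - f q) * (c₂ - g p)) := by
      rw [hfp, hfq, hgp, hgq]
      linarith [t1, t2, t3, t4]
    have hqp_pos : 0 < (c₁ - f q) * (c₂ - g p) := mul_pos (hf q hq) (hg p hp)
    rw [heq] at main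
    have hexp : Real.exp (hilbertDist Ω p q) ≤ E₁ * E₂ :=
      le_of_mul_le_mul_right (by linarith [main]) hqp_pos
    have : Real.exp (hilbertDist Ω p q) ≤
        Real.exp (hilbertDist Ω x₁ x₂ + hilbertDist Ω y₁ y₂) := by
      rw [Real.exp_add]; exact hexp
    exact Real.exp_le_exp.mp this

/-- The Hausdorff distance (for the Hilbert metric) between the segments `[x₁,y₁]` and
`[x₂,y₂]` is at most `d_Ω(x₁,x₂) + d_Ω(y₁,y₂)`. -/
theorem hausdorff_dist_segments_le {d : ℕ} (Ω : Set (Ed d)) (hΩ : IsProperlyConvex Ω)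
    (x₁ x₂ y₁ y₂ : Ed d) (hx₁ : x₁ ∈ Ω) (hx₂ : x₂ ∈ Ω) (hy₁ : y₁ ∈ Ω) (hy₂ : y₂ ∈ Ω) :
    (∀ p ∈ segment ℝ x₁ y₁, ∃ q ∈ segment ℝ x₂ y₂,
        hilbertDist Ω p q ≤ hilbertDist Ω x₁ x₂ + hilbertDist Ω y₁ y₂) ∧
    (∀ q ∈ segment ℝ x₂ y₂, ∃ p ∈ segment ℝ x₁ y₁,
        hilbertDist Ω p q ≤ hilbertDist Ω x₁ x₂ + hilbertDist Ω y₁ y₂) := by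
  constructor
  · rintro p ⟨a, b, ha, hb, hab, rfl⟩
    exact ⟨a • x₂ + b • y₂, ⟨a, b, ha, hb, hab, rfl⟩,
      hilbert_core hΩ hx₁ hx₂ hy₁ hy₂ ha hb hab⟩
  · rintro q ⟨a, b, ha, hb, hab, rfl⟩
    exact ⟨a • x₁ + b • y₁, ⟨a, b, ha, hb, hab, rfl⟩,
      hilbert_core hΩ hx₁ hx₂ hy₁ hy₂ ha hb hab⟩
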